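/- Suppose (a₁,b₁,T₁) and (a₂,b₂,T₂) are 4-chained, and write G_j = G_{a_j,b_j,T_j} for j = 1,2. Then for every integer k ≥ 1 the interval [s_{8k−2}(b₂,T₂) + (π/6)·T₂·b₂^{8k−2}, s_{8k−1}(b₂,T₂) − (π/6)·T₂·b₂^{8k−2}] is nonempty, and for every χ in this interval one has G₁(χ) ≤ −(1/2)·a₂·T₂·b₂^{8k−2} and G₂(χ) ≥ (1/2)·a₂·T₂·b₂^{8k−2}. -/

import Mathlib

open Real Filter Set

/-- Breakpoints `s_n(b,T) = T·π·(b^n − 1)/(b − 1)`. -/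
noncomputable def brk (b T : ℝ) (n : ℕ) : ℝ := T * Real.pi * (b ^ n - 1) / (b - 1)

/-- Index of the segment containing `x ≥ 0`: the unique `m` with `s_m ≤ x < s_{m+1}`
(for `b > 1`, `T > 0`). -/
noncomputable def seg (b T x : ℝ) : ℕ := sInf {n : ℕ | x < brk b T (n + 1)}

/-- The saturated Nussbaum function `N_{a,b,T}`: on `[s_{n−1}, s_n)` (with `m = n − 1`)
it equals `(−1)^m·a·cos((χ − s_m)/(b^m·T))`, extended evenly to `χ < 0`. -/
noncomputable def satN (a b T : ℝ) (χ : ℝ) : ℝ :=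
  (-1 : ℝ) ^ (seg b T |χ|) * a *
    Real.cos ((|χ| - brk b T (seg b T |χ|)) / (b ^ (seg b T |χ|) * T))

/-- The integrated function `G_{a,b,T}(χ) = ∫_0^χ N_{a,b,T}(τ) dτ`. -/
noncomputable def satG (a b T : ℝ) (χ : ℝ) : ℝ := ∫ τ in (0:ℝ)..χ, satN a b T τ

/-- Two triples `(a₁,b₁,T₁)`, `(a₂,b₂,T₂)` are 4-chained. -/
def Chained4 (a₁ b₁ T₁ a₂ b₂ T₂ : ℝ) : Prop :=
  0 < a₂ ∧ 1 < b₂ ∧ 0 < T₂ ∧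
    b₁ = b₂ ^ 4 ∧ a₁ = (b₂ ^ 3 / (1 + b₂ + b₂ ^ 2 + b₂ ^ 3)) * a₂ ∧
    T₁ = (1 + b₂ + b₂ ^ 2 + b₂ ^ 3) * T₂

lemma brk_zero (b T : ℝ) : brk b T 0 = 0 := by simp [brk]

lemma brk_succ {b : ℝ} (T : ℝ) (hb : 1 < b) (n : ℕ) :
    brk b T (n + 1) = brk b T n + Real.pi * T * b ^ n := by
  have h : b - 1 ≠ 0 := by linarith
  unfold brk; field_simp; ring

lemma brk_strictMono {b T : ℝ} (hb : 1 < b) (hT : 0 < T) : StrictMono (brk b T) := by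
  apply strictMono_nat_of_lt_succ
  intro n
  rw [brk_succ T hb n]
  have : 0 < Real.pi * T * b ^ n := by positivity
  linarith

lemma brk_nonneg {b T : ℝ} (hb : 1 < b) (hT : 0 < T) (n : ℕ) : 0 ≤ brk b T n := by
  rw [← brk_zero b T]
  exact (brk_strictMono hb hT).monotone (Nat.zero_le n)

lemma seg_eq {b T x : ℝ} (hb : 1 < b) (hT : 0 < T) {m : ℕ}
    (h1 : brk b T m ≤ x) (h2 : x < brk b T (m + 1)) : seg b T x = m := by
  have hmem : m ∈ {n : ℕ | x < brk b T (n + 1)} := h2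
  refine le_antisymm (Nat.sInf_le hmem) (le_csInf ⟨m, hmem⟩ ?_)
  intro k hk
  by_contra hlt
  push_neg at hlt
  have : brk b T (k + 1) ≤ brk b T m :=
    (brk_strictMono hb hT).monotone (by omega)
  exact absurd hk (by simp only [Set.mem_setOf_eq]; push_neg; linarith)

lemma satN_eq {a b T x : ℝ} (hb : 1 < b) (hT : 0 < T) {m : ℕ}
    (h0 : 0 ≤ x) (h1 : brk b T m ≤ x) (h2 : x < brk b T (m + 1)) :
    satN a b T x = (-1 : ℝ) ^ m * a * Real.cos ((x - brk b T m) / (b ^ m * T)) := by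
  unfold satN
  rw [abs_of_nonneg h0, seg_eq hb hT h1 h2]
open Real Filter Set MeasureTheory intervalIntegral

lemma integral_cos_seg (c s y z : ℝ) (hc : c ≠ 0) :
    ∫ τ in y..z, Real.cos ((τ - s) / c)
      = c * (Real.sin ((z - s) / c) - Real.sin ((y - s) / c)) := by
  rw [intervalIntegral.integral_comp_sub_right (fun τ => Real.cos (τ / c)) s,
      intervalIntegral.integral_comp_div (fun τ => Real.cos τ) hc,
      integral_cos]
  simp [smul_eq_mul]

open scoped Interval in
lemma satN_ae_eq {a b T : ℝ} (hb : 1 < b) (hT : 0 < T) (m : ℕ) {y z : ℝ}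
    (hy : brk b T m ≤ y) (hz : z ≤ brk b T (m + 1)) (hyz : y ≤ z) :
    ∀ᵐ τ : ℝ, τ ∈ Ι y z →
      satN a b T τ = (-1 : ℝ) ^ m * a * Real.cos ((τ - brk b T m) / (b ^ m * T)) := by
  have hne : ∀ᵐ τ : ℝ, τ ≠ brk b T (m + 1) := by
    rw [MeasureTheory.ae_iff]
    simpa using MeasureTheory.measure_singleton (α := ℝ) (brk b T (m + 1))
  filter_upwards [hne] with τ hτ hmem
  rw [Set.uIoc_of_le hyz] at hmem
  have h1 : brk b T m ≤ τ := le_of_lt (lt_of_le_of_lt hy hmem.1)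
  have h2 : τ < brk b T (m + 1) := lt_of_le_of_ne (le_trans hmem.2 hz) hτ
  exact satN_eq hb hT (le_trans (brk_nonneg hb hT m) h1) h1 h2

lemma satN_integrable_seg {a b T : ℝ} (hb : 1 < b) (hT : 0 < T) (m : ℕ) {y z : ℝ}
    (hy : brk b T m ≤ y) (hz : z ≤ brk b T (m + 1)) (hyz : y ≤ z) :
    IntervalIntegrable (satN a b T) volume y z := by
  rw [intervalIntegrable_iff]
  apply MeasureTheory.Integrable.congr (g := satN a b T)
      (f := fun τ => (-1 : ℝ) ^ m * a * Real.cos ((τ - brk b T m) / (b ^ m * T)))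
  · apply Continuous.integrableOn_uIoc
    continuity
  · exact (MeasureTheory.ae_restrict_iff' measurableSet_uIoc).2
      ((satN_ae_eq hb hT m hy hz hyz).mono fun τ h hm => (h hm).symm)

lemma satN_integral_seg {a b T : ℝ} (hb : 1 < b) (hT : 0 < T) (m : ℕ) {y z : ℝ}
    (hy : brk b T m ≤ y) (hz : z ≤ brk b T (m + 1)) (hyz : y ≤ z) :
    ∫ τ in y..z, satN a b T τ
      = (-1 : ℝ) ^ m * a * ((b ^ m * T) *
          (Real.sin ((z - brk b T m) / (b ^ m * T))
            - Real.sin ((y - brk b T m) / (b ^ m * T)))) := by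
  have hc : (b : ℝ) ^ m * T ≠ 0 := by positivity
  rw [intervalIntegral.integral_congr_ae (satN_ae_eq hb hT m hy hz hyz)]
  rw [intervalIntegral.integral_const_mul, integral_cos_seg _ _ _ _ hc]
open Real Filter Set MeasureTheory intervalIntegral

lemma satN_integrable_to_brk {a b T : ℝ} (hb : 1 < b) (hT : 0 < T) (m : ℕ) :
    IntervalIntegrable (satN a b T) volume 0 (brk b T m) := by
  induction m with
  | zero => rw [brk_zero]
  | succ n ih =>
    exact ih.trans (satN_integrable_seg hb hT n le_rfl le_rfl
      ((brk_strictMono hb hT).monotone (Nat.le_succ n)))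

lemma satG_brk {a b T : ℝ} (hb : 1 < b) (hT : 0 < T) (m : ℕ) :
    satG a b T (brk b T m) = 0 := by
  induction m with
  | zero => simp [satG, brk_zero]
  | succ n ih =>
    have hle : brk b T n ≤ brk b T (n + 1) := (brk_strictMono hb hT).monotone (Nat.le_succ n)
    have hsplit := intervalIntegral.integral_add_adjacent_intervals
      (satN_integrable_to_brk (a := a) hb hT n)
      (satN_integrable_seg (a := a) hb hT n le_rfl le_rfl hle)
    have hval := satN_integral_seg (a := a) hb hT n (y := brk b T n)
      (z := brk b T (n + 1)) le_rfl le_rfl hle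
    have hc : (b : ℝ) ^ n * T ≠ 0 := by positivity
    have hpi : (brk b T (n + 1) - brk b T n) / (b ^ n * T) = Real.pi := by
      rw [brk_succ T hb n]; field_simp; ring
    unfold satG at *
    rw [← hsplit, ih, hval, hpi]
    simp

lemma satG_eq {a b T : ℝ} (hb : 1 < b) (hT : 0 < T) (m : ℕ) {χ : ℝ}
    (h1 : brk b T m ≤ χ) (h2 : χ ≤ brk b T (m + 1)) :
    satG a b T χ
      = (-1 : ℝ) ^ m * a * ((b ^ m * T) * Real.sin ((χ - brk b T m) / (b ^ m * T))) := by
  have hsplit := intervalIntegral.integral_add_adjacent_intervals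
    (satN_integrable_to_brk (a := a) hb hT m)
    (satN_integrable_seg (a := a) hb hT m le_rfl h2 h1)
  have hval := satN_integral_seg (a := a) hb hT m le_rfl h2 h1
  have h0 := satG_brk (a := a) hb hT m
  unfold satG at *
  rw [← hsplit, h0, hval]
  simp
open Real Filter Set

lemma half_le_sin {θ : ℝ} (h1 : Real.pi / 6 ≤ θ) (h2 : θ ≤ 5 * Real.pi / 6) :
    1 / 2 ≤ Real.sin θ := by
  have hpi := Real.pi_pos
  rw [← Real.cos_pi_div_two_sub θ, ← Real.cos_abs]
  have h3 : |Real.pi / 2 - θ| ≤ Real.pi / 3 := abs_le.2 ⟨by linarith, by linarith⟩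
  calc (1 : ℝ) / 2 = Real.cos (Real.pi / 3) := (Real.cos_pi_div_three).symm
    _ ≤ Real.cos |Real.pi / 2 - θ| :=
        Real.cos_le_cos_of_nonneg_of_le_pi (abs_nonneg _) (by linarith) h3

lemma min_sin_le {x y θ : ℝ} (hx : 0 ≤ x) (hy : y ≤ Real.pi) (h1 : x ≤ θ) (h2 : θ ≤ y) :
    min (Real.sin x) (Real.sin y) ≤ Real.sin θ := by
  have hpi := Real.pi_pos
  rcases le_total θ (Real.pi / 2) with hc | hc
  · refine (min_le_left _ _).trans ?_
    exact Real.strictMonoOn_sin.monotoneOn ⟨by linarith, by linarith⟩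
      ⟨by linarith, hc⟩ h1
  · refine (min_le_right _ _).trans ?_
    rw [← Real.sin_pi_sub y, ← Real.sin_pi_sub θ]
    exact Real.strictMonoOn_sin.monotoneOn ⟨by linarith, by linarith⟩
      ⟨by linarith, by linarith⟩ (by linarith)

lemma cube_sin_bound {u t : ℝ} (ht0 : 0 < t) (ht1 : t ≤ 1)
    (hkey : u ≤ 2 * (t - t ^ 3 / 4)) : u / 2 ≤ Real.sin t := by
  have := Real.sin_gt_sub_cube ht0
  linarith [pow_pos ht0 3]
open Real Filter Set

lemma poly_key {b S N : ℝ} (hb0 : 0 < b) (hS : 0 < S) (hN0 : 0 < N)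
    (hbS : b^3 ≤ S) (hNb : N ≤ (109/25) * b^2) (hb52 : 5/2 ≤ b)
    (h4 : S + 4*b + 5*b^2 ≤ b * N) :
    1 * (432 * S^3) ≤ 144*Real.pi*b*N*S^2 - Real.pi^3*b*N^3 := by
  have hpil : (3.1415 : ℝ) < Real.pi := by linarith [Real.pi_gt_d6]
  have hpiu : Real.pi < 3.15 := Real.pi_lt_d2
  have hpi : 0 < Real.pi := Real.pi_pos
  have h1 : N^3 ≤ ((109/25) * b^2)^3 := by
    gcongr
  have h2 : Real.pi^3 ≤ (3.15:ℝ)^3 := by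
    gcongr
  have hp1 : Real.pi^3 * N^3 ≤ (3.15:ℝ)^3 * ((109/25)*b^2)^3 :=
    mul_le_mul h2 h1 (by positivity) (by positivity)
  have hp1' : Real.pi^3 * N^3 * b ≤ (3.15:ℝ)^3 * ((109/25)*b^2)^3 * b :=
    mul_le_mul_of_nonneg_right hp1 (le_of_lt hb0)
  have h3 : b^6 ≤ S^2 := by
    calc b^6 = (b^3)^2 := by ring
      _ ≤ S^2 := by gcongr
  have hb7 : b^7 ≤ b * S^2 := by
    calc b^7 = b * b^6 := by ring
      _ ≤ b * S^2 := mul_le_mul_of_nonneg_left h3 (le_of_lt hb0)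
  have hbb : b * S^2 ≤ (2/5) * (b^2 * S^2) := by
    have : b ≤ (2/5) * b^2 := by nlinarith
    nlinarith [sq_nonneg S]
  have hp2 : (S + 4*b + 5*b^2) * (144*Real.pi*S^2) ≤ (b*N) * (144*Real.pi*S^2) :=
    mul_le_mul_of_nonneg_right h4 (by positivity)
  have hy1 : (3.1415:ℝ) * S^3 ≤ Real.pi * S^3 :=
    mul_le_mul_of_nonneg_right (le_of_lt hpil) (by positivity)
  have hy2 : (3.1415:ℝ) * (b*S^2) ≤ Real.pi * (b*S^2) :=
    mul_le_mul_of_nonneg_right (le_of_lt hpil) (by positivity)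
  have hy3 : (3.1415:ℝ) * (b^2*S^2) ≤ Real.pi * (b^2*S^2) :=
    mul_le_mul_of_nonneg_right (le_of_lt hpil) (by positivity)
  have hpos1 : (0:ℝ) ≤ b * S^2 := by positivity
  have hpos2 : (0:ℝ) ≤ S^3 := by positivity
  have hexp : (3.15:ℝ)^3 * ((109/25)*b^2)^3 * b = (323818116363 / 125000000) * b^7 := by
    norm_num [mul_pow]; ring
  rw [hexp] at hp1'
  nlinarith [hp1', hb7, hbb, hp2, hy1, hy2, hy3, hpos1, hpos2]
open Real Filter Set

lemma poly_key_high {b S N : ℝ} (hb0 : 0 < b) (hS : 0 < S) (hN0 : 0 < N)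
    (hbS : b^3 ≤ S) (hNb : N ≤ (161/25) * b^2) (hb5 : 5 ≤ b)
    (h4 : S + 4*b + 5*b^2 ≤ b * N) :
    1 * (432 * S^3) ≤ 144*Real.pi*b*N*S^2 - Real.pi^3*b*N^3 := by
  have hpil : (3.1415 : ℝ) < Real.pi := by linarith [Real.pi_gt_d6]
  have hpiu : Real.pi < 3.15 := Real.pi_lt_d2
  have hpi : 0 < Real.pi := Real.pi_pos
  have h1 : N^3 ≤ ((161/25) * b^2)^3 := by gcongr
  have h2 : Real.pi^3 ≤ (3.15:ℝ)^3 := by gcongr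
  have hp1 : Real.pi^3 * N^3 ≤ (3.15:ℝ)^3 * ((161/25)*b^2)^3 :=
    mul_le_mul h2 h1 (by positivity) (by positivity)
  have hp1' : Real.pi^3 * N^3 * b ≤ (3.15:ℝ)^3 * ((161/25)*b^2)^3 * b :=
    mul_le_mul_of_nonneg_right hp1 (le_of_lt hb0)
  have h3 : b^6 ≤ S^2 := by
    calc b^6 = (b^3)^2 := by ring
      _ ≤ S^2 := by gcongr
  have hb7 : b^7 ≤ b * S^2 := by
    calc b^7 = b * b^6 := by ring
      _ ≤ b * S^2 := mul_le_mul_of_nonneg_left h3 (le_of_lt hb0)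
  have hbb : b * S^2 ≤ (1/5) * (b^2 * S^2) := by
    have : b ≤ (1/5) * b^2 := by nlinarith
    nlinarith [sq_nonneg S]
  have hp2 : (S + 4*b + 5*b^2) * (144*Real.pi*S^2) ≤ (b*N) * (144*Real.pi*S^2) :=
    mul_le_mul_of_nonneg_right h4 (by positivity)
  have hy1 : (3.1415:ℝ) * S^3 ≤ Real.pi * S^3 :=
    mul_le_mul_of_nonneg_right (le_of_lt hpil) (by positivity)
  have hy2 : (3.1415:ℝ) * (b*S^2) ≤ Real.pi * (b*S^2) :=
    mul_le_mul_of_nonneg_right (le_of_lt hpil) (by positivity)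
  have hy3 : (3.1415:ℝ) * (b^2*S^2) ≤ Real.pi * (b^2*S^2) :=
    mul_le_mul_of_nonneg_right (le_of_lt hpil) (by positivity)
  have hpos1 : (0:ℝ) ≤ b * S^2 := by positivity
  have hpos2 : (0:ℝ) ≤ S^3 := by positivity
  have hexp : (3.15:ℝ)^3 * ((161/25)*b^2)^3 * b = (1043516394207 / 125000000) * b^7 := by
    norm_num [mul_pow]; ring
  rw [hexp] at hp1'
  nlinarith [hp1', hb7, hbb, hp2, hy1, hy2, hy3, hpos1, hpos2]
open Real Filter Set

set_option maxHeartbeats 1000000 in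
lemma key_sin {b θ : ℝ} (hb : 1 < b)
    (hl : Real.pi * (6 + 6*b + b^2) / (6 * (1 + b + b^2 + b^3)) ≤ θ)
    (hh : θ ≤ Real.pi * (6 + 6*b + 5*b^2) / (6 * (1 + b + b^2 + b^3))) :
    1 / (2*b) ≤ Real.sin θ := by
  have hb0 : 0 < b := by linarith
  have hS : (0:ℝ) < 1 + b + b^2 + b^3 := by positivity
  have hpil : (3.1415 : ℝ) < Real.pi := by linarith [Real.pi_gt_d6]
  have hpiu : Real.pi < 3.15 := Real.pi_lt_d2
  have hpi : 0 < Real.pi := Real.pi_pos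
  set S := 1 + b + b^2 + b^3 with hSdef
  set tl := Real.pi * (6 + 6*b + b^2) / (6 * S) with htl
  set th := Real.pi * (6 + 6*b + 5*b^2) / (6 * S) with hth
  have htl0 : 0 < tl := by rw [htl]; positivity
  have hthpi : th ≤ Real.pi := by
    rw [hth, div_le_iff₀ (by positivity)]
    nlinarith [sq_nonneg b, pow_pos hb0 3]
  have hmin : min (Real.sin tl) (Real.sin th) ≤ Real.sin θ :=
    min_sin_le (le_of_lt htl0) hthpi hl hh
  have hbS : b^3 ≤ S := by nlinarith
  have hlow : 1 / (2*b) ≤ Real.sin tl := by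
    rcases le_total b (5/2) with hc | hc
    · have h1 : Real.pi / 6 ≤ tl := by
        rw [htl, le_div_iff₀ (by positivity)]
        nlinarith
      have h2 : tl ≤ 5 * Real.pi / 6 := by
        rw [htl, div_le_iff₀ (by positivity)]
        nlinarith
      have h3 : 1/(2*b) ≤ 1/2 := by
        rw [div_le_div_iff₀ (by positivity) (by norm_num)]; linarith
      linarith [half_le_sin h1 h2]
    · set N := 6 + 6*b + b^2 with hN
      have hN0 : (0:ℝ) < N := by positivity
      have ht1 : tl ≤ 1 := by
        rw [htl, div_le_iff₀ (by positivity)]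
        nlinarith
      have hNb : N ≤ (109/25) * b^2 := by nlinarith
      have h4 : S + 4*b + 5*b^2 ≤ b * N := by nlinarith
      have hkey : 1/b ≤ 2 * (tl - tl^3/4) := by
        have expand : 2 * (tl - tl^3/4) * b
            = (144*Real.pi*b*N*S^2 - Real.pi^3*b*N^3) / (432 * S^3) := by
          rw [htl]; field_simp; ring
        rw [div_le_iff₀ hb0, expand, le_div_iff₀ (by positivity)]
        exact poly_key hb0 hS hN0 hbS hNb hc h4
      calc 1/(2*b) = (1/b)/2 := by ring
        _ ≤ Real.sin tl := cube_sin_bound htl0 ht1 hkey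
  have hhigh : 1 / (2*b) ≤ Real.sin th := by
    rcases le_total b 5 with hc | hc
    · have h1 : Real.pi / 6 ≤ th := by
        rw [hth, le_div_iff₀ (by positivity)]
        nlinarith
      have h2 : th ≤ 5 * Real.pi / 6 := by
        rw [hth, div_le_iff₀ (by positivity)]
        nlinarith
      have h3 : 1/(2*b) ≤ 1/2 := by
        rw [div_le_div_iff₀ (by positivity) (by norm_num)]; linarith
      linarith [half_le_sin h1 h2]
    · set N := 6 + 6*b + 5*b^2 with hN
      have hN0 : (0:ℝ) < N := by positivity
      have hth0 : 0 < th := by rw [hth]; positivity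
      have ht1 : th ≤ 1 := by
        rw [hth, div_le_iff₀ (by positivity)]
        have e1 : Real.pi * b^2 ≤ 3.15 * b^2 :=
          mul_le_mul_of_nonneg_right (le_of_lt hpiu) (sq_nonneg b)
        have e2 : Real.pi * b ≤ 3.15 * b :=
          mul_le_mul_of_nonneg_right (le_of_lt hpiu) (le_of_lt hb0)
        have e3 : 5 * b^2 ≤ b^3 := by nlinarith
        nlinarith
      have hNb : N ≤ (161/25) * b^2 := by nlinarith [sq_nonneg (b-5)]
      have h4 : S + 4*b + 5*b^2 ≤ b * N := by nlinarith
      have hkey : 1/b ≤ 2 * (th - th^3/4) := by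
        have expand : 2 * (th - th^3/4) * b
            = (144*Real.pi*b*N*S^2 - Real.pi^3*b*N^3) / (432 * S^3) := by
          rw [hth]; field_simp; ring
        rw [div_le_iff₀ hb0, expand, le_div_iff₀ (by positivity)]
        exact poly_key_high hb0 hS hN0 hbS hNb hc h4
      calc 1/(2*b) = (1/b)/2 := by ring
        _ ≤ Real.sin th := cube_sin_bound hth0 ht1 hkey
  calc 1/(2*b) ≤ min (Real.sin tl) (Real.sin th) := le_min hlow hhigh
    _ ≤ Real.sin θ := hmin
open Real Filter Set

lemma brk_chain {b T : ℝ} (hb : 1 < b) (n : ℕ) :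
    brk (b^4) ((1 + b + b^2 + b^3) * T) n = brk b T (4 * n) := by
  have hb1 : b - 1 ≠ 0 := by linarith
  have hS : (1:ℝ) + b + b^2 + b^3 ≠ 0 := by positivity
  have hfac : b^4 - 1 = (b - 1) * (1 + b + b^2 + b^3) := by ring
  have hb41 : b^4 - 1 ≠ 0 := by rw [hfac]; exact mul_ne_zero hb1 hS
  unfold brk
  rw [mul_comm 4 n, pow_mul, hfac]
  field_simp
  ring
open Real Filter Set

set_option maxHeartbeats 1600000

/-- on a common interval inside the `(8k−1)`-th fast segment,
`G₁ ≤ −(1/2)·a₂·T₂·b₂^{8k−2}` while `G₂ ≥ (1/2)·a₂·T₂·b₂^{8k−2}`. -/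
theorem chained_opposite_signs_interval (a₁ b₁ T₁ a₂ b₂ T₂ : ℝ)
    (h : Chained4 a₁ b₁ T₁ a₂ b₂ T₂) (k : ℕ) (hk : 1 ≤ k) :
    brk b₂ T₂ (8 * k - 2) + (Real.pi / 6) * T₂ * b₂ ^ (8 * k - 2) ≤
      brk b₂ T₂ (8 * k - 1) - (Real.pi / 6) * T₂ * b₂ ^ (8 * k - 2) ∧
    ∀ χ ∈ Set.Icc (brk b₂ T₂ (8 * k - 2) + (Real.pi / 6) * T₂ * b₂ ^ (8 * k - 2))
        (brk b₂ T₂ (8 * k - 1) - (Real.pi / 6) * T₂ * b₂ ^ (8 * k - 2)),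
      satG a₁ b₁ T₁ χ ≤ -(1 / 2) * (a₂ * T₂ * b₂ ^ (8 * k - 2)) ∧
      (1 / 2) * (a₂ * T₂ * b₂ ^ (8 * k - 2)) ≤ satG a₂ b₂ T₂ χ := by
  obtain ⟨ha2, hb2, hT2, hb1e, ha1e, hT1e⟩ := h
  obtain ⟨j, rfl⟩ : ∃ j, k = j + 1 := ⟨k - 1, by omega⟩
  have e2 : 8 * (j + 1) - 2 = 8 * j + 6 := by omega
  have e1 : 8 * (j + 1) - 1 = 8 * j + 7 := by omega
  rw [e1, e2]
  have hb0 : (0:ℝ) < b₂ := by linarith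
  have hpi := Real.pi_pos
  set b := b₂
  set T := T₂
  set a := a₂
  have hS : (0:ℝ) < 1 + b + b^2 + b^3 := by positivity
  have hX : (0:ℝ) < Real.pi * T * b ^ (8*j+6) := by positivity
  have hstep : brk b T (8*j+7) = brk b T (8*j+6) + Real.pi * T * b ^ (8*j+6) :=
    brk_succ T hb2 (8*j+6)
  constructor
  · rw [hstep]; nlinarith
  intro χ hχ
  obtain ⟨hχ1, hχ2⟩ := hχ
  -- position within the fine segment
  have hfm : brk b T (8*j+6) ≤ χ := by nlinarith
  have hfm2 : χ ≤ brk b T (8*j+7) := by rw [hstep] at hχ2 ⊢; nlinarith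
  constructor
  · -- G₁ bound
    have hb1 : (1:ℝ) < b₁ := by rw [hb1e]; exact one_lt_pow₀ hb2 (by norm_num)
    have hT1 : (0:ℝ) < T₁ := by rw [hT1e]; positivity
    have hrel : ∀ n, brk b₁ T₁ n = brk b T (4 * n) := by
      intro n; rw [hb1e, hT1e]; exact brk_chain hb2 n
    have hlo : brk b₁ T₁ (2*j+1) ≤ χ := by
      rw [hrel]
      have : brk b T (4*(2*j+1)) ≤ brk b T (8*j+6) :=
        (brk_strictMono hb2 hT2).monotone (by omega)
      linarith
    have hhi : χ ≤ brk b₁ T₁ (2*j+1+1) := by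
      rw [hrel]
      have : brk b T (8*j+7) ≤ brk b T (4*(2*j+1+1)) :=
        (brk_strictMono hb2 hT2).monotone (by omega)
      linarith
    have hG1 := satG_eq (a := a₁) hb1 hT1 (2*j+1) hlo hhi
    have hodd : (-1:ℝ) ^ (2*j+1) = -1 := Odd.neg_one_pow ⟨j, by ring⟩
    -- identify the scale
    have hb1p : b₁ ^ (2*j+1) = b ^ (8*j+4) := by
      rw [hb1e, ← pow_mul]; ring_nf
    have hbrk14 : brk b₁ T₁ (2*j+1) = brk b T (8*j+4) := by
      rw [hrel]; ring_nf
    set θ := (χ - brk b₁ T₁ (2*j+1)) / (b₁ ^ (2*j+1) * T₁) with hθ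
    -- θ bounds
    have hbrk45 : brk b T (8*j+5) = brk b T (8*j+4) + Real.pi * T * b ^ (8*j+4) :=
      brk_succ T hb2 (8*j+4)
    have hbrk56 : brk b T (8*j+6) = brk b T (8*j+5) + Real.pi * T * b ^ (8*j+5) :=
      brk_succ T hb2 (8*j+5)
    have hc0 : (0:ℝ) < b ^ (8*j+4) * ((1 + b + b^2 + b^3) * T) := by positivity
    have hθden : b₁ ^ (2*j+1) * T₁ = b ^ (8*j+4) * ((1 + b + b^2 + b^3) * T) := by
      rw [hb1p, hT1e]
    have hθlo : Real.pi * (6 + 6*b + b^2) / (6 * (1 + b + b^2 + b^3)) ≤ θ := by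
      rw [hθ, hθden, hbrk14, le_div_iff₀ hc0]
      have hkey : Real.pi * (6 + 6*b + b^2) / (6 * (1 + b + b^2 + b^3)) *
          (b ^ (8*j+4) * ((1 + b + b^2 + b^3) * T))
          = Real.pi * T * b ^ (8*j+4) + Real.pi * T * b ^ (8*j+5)
            + Real.pi / 6 * T * b ^ (8*j+6) := by
        field_simp
        ring
      rw [hkey]
      nlinarith
    have hθhi : θ ≤ Real.pi * (6 + 6*b + 5*b^2) / (6 * (1 + b + b^2 + b^3)) := by
      rw [hθ, hθden, hbrk14, div_le_iff₀ hc0]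
      have hkey : Real.pi * (6 + 6*b + 5*b^2) / (6 * (1 + b + b^2 + b^3)) *
          (b ^ (8*j+4) * ((1 + b + b^2 + b^3) * T))
          = Real.pi * T * b ^ (8*j+4) + Real.pi * T * b ^ (8*j+5)
            + Real.pi * T * b ^ (8*j+6) - Real.pi / 6 * T * b ^ (8*j+6) := by
        field_simp
        ring
      rw [hkey, hstep] at *
      nlinarith
    have hsin := key_sin hb2 hθlo hθhi
    rw [hG1, hodd]
    have hscale : a₁ * (b₁ ^ (2*j+1) * T₁ * Real.sin θ)
        = a * T * b ^ (8*j+7) * Real.sin θ := by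
      rw [ha1e, hb1p, hT1e]
      field_simp
      ring
    rw [neg_one_mul, neg_mul]  -- shape: -(a₁ * (...))
    rw [hscale]
    have hfin : 1/(2*b) * (a * T * b ^ (8*j+7)) ≤ Real.sin θ * (a * T * b ^ (8*j+7)) :=
      mul_le_mul_of_nonneg_right hsin (by positivity)
    have hid : 1/(2*b) * (a * T * b ^ (8*j+7)) = 1/2 * (a * T * b ^ (8*j+6)) := by
      field_simp
      ring
    rw [hid] at hfin
    nlinarith
  · -- G₂ bound
    have hG2 := satG_eq (a := a) hb2 hT2 (8*j+6) hfm hfm2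
    have heven : (-1:ℝ) ^ (8*j+6) = 1 := Even.neg_one_pow ⟨4*j+3, by ring⟩
    set θ := (χ - brk b T (8*j+6)) / (b ^ (8*j+6) * T) with hθ
    have hc0 : (0:ℝ) < b ^ (8*j+6) * T := by positivity
    have hθlo : Real.pi / 6 ≤ θ := by
      rw [hθ, le_div_iff₀ hc0]
      nlinarith
    have hθhi : θ ≤ 5 * Real.pi / 6 := by
      rw [hθ, div_le_iff₀ hc0]
      rw [hstep] at hχ2
      nlinarith
    have hsin := half_le_sin hθlo hθhi
    rw [hG2, heven]
    have hfin : 1/2 * (b ^ (8*j+6) * T) ≤ Real.sin θ * (b ^ (8*j+6) * T) :=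
      mul_le_mul_of_nonneg_right hsin (by positivity)
    nlinarith
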